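/- Let (Ω, ℱ, P) be a probability space with a filtration (ℱ_t)_{t∈ℕ}, and let (x_t), (w_t), (η_t) be sequences of real-valued random variables such that x_t, η_t, and w_{t-1} are ℱ_{t-1}-measurable for every t, and x_{t+1} = (1 - η_t) x_t + η_t w_t for all t. Assume: (1) there exist finite constants A, B such that E[w_t² | ℱ_{t-1}] ≤ A |x_t|² + B almost surely for all t; (2) E[w_t | ℱ_{t-1}] = 0 almost surely for all t; (3) η_t ∈ [0,1] for all t; (4) ∑_{t=0}^∞ η_t = ∞ almost surely; (5) ∑_{t=0}^∞ η_t² < ∞ almost surely. Then x_t converges to 0 almost surely. -/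

import Mathlib

open MeasureTheory Filter Topology Finset
open scoped ENNReal NNReal

namespace SAtmp

variable {Ω : Type*}

/-- product of two L² functions is integrable (via AM-GM). -/
lemma integrable_mul_of_sq {m : MeasurableSpace Ω} {P : Measure Ω} {f g : Ω → ℝ}
    (hf : MeasureTheory.MemLp f 2 P) (hg : MeasureTheory.MemLp g 2 P) :
    Integrable (fun ω => f ω * g ω) P := by
  refine Integrable.mono' ((hf.integrable_sq.add hg.integrable_sq).const_mul (1/2 : ℝ))
    (hf.aestronglyMeasurable.mul hg.aestronglyMeasurable) ?_
  refine Filter.Eventually.of_forall (fun ω => ?_)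
  have h := sq_nonneg (|f ω| - |g ω|)
  have : ‖f ω * g ω‖ = |f ω| * |g ω| := by rw [Real.norm_eq_abs, abs_mul]
  rw [this]
  simp only [Pi.add_apply]
  nlinarith [sq_abs (f ω), sq_abs (g ω)]

/-- the frozen process: follows `v` while the indicator `I` is on, freezes afterwards. -/
noncomputable def frz (I v : ℕ → Ω → ℝ) : ℕ → Ω → ℝ
  | 0 => v 0
  | (t+1) => fun ω => I t ω * v (t+1) ω + (1 - I t ω) * frz I v t ω

lemma frz_succ (I v : ℕ → Ω → ℝ) (t : ℕ) (ω : Ω) :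
    frz I v (t+1) ω = I t ω * v (t+1) ω + (1 - I t ω) * frz I v t ω := rfl


lemma rs_aux {m : MeasurableSpace Ω} {P : Measure Ω} [IsProbabilityMeasure P]
    (ℱ : Filtration ℕ m) (v β : ℕ → Ω → ℝ)
    (hv_meas : ∀ t, StronglyMeasurable[ℱ t] (v t))
    (hβ_meas : ∀ t, StronglyMeasurable[ℱ t] (β t))
    (hv_int : ∀ t, Integrable (v t) P)
    (hv_nonneg : ∀ t ω, 0 ≤ v t ω)
    (hβ01 : ∀ t ω, β t ω ∈ Set.Icc (0:ℝ) 1)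
    (A B : ℝ) (hA : 0 ≤ A) (hB : 0 ≤ B)
    (hdrift : ∀ t, P[v (t+1) | ℱ t] ≤ᵐ[P]
        fun ω => (1 - β t ω) * v t ω + (β t ω)^2 * (A * v t ω + B))
    (K : ℕ) :
    ∀ᵐ ω ∂P, (∀ t, ∑ s ∈ Finset.range t, (β s ω)^2 ≤ K) →
      ¬ Summable (fun t => β t ω) →
      Tendsto (fun t => v t ω) atTop (𝓝 0) := by
  classical
  set I : ℕ → Ω → ℝ :=
    fun t ω => if (∑ s ∈ Finset.range (t+1), (β s ω)^2) ≤ K then 1 else 0 with hIdef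
  set p : ℕ → Ω → ℝ :=
    fun t ω => ∏ s ∈ Finset.range t, (1 + A * (I s ω * (β s ω)^2)) with hpdef
  set U : ℕ → Ω → ℝ := frz I v with hUdef
  set Q : ℕ → Ω → ℝ := fun t ω => (p t ω)⁻¹ * U t ω with hQdef
  set G : ℕ → Ω → ℝ :=
    fun s ω => (p (s+1) ω)⁻¹ * (I s ω * β s ω * v s ω - B * (I s ω * (β s ω)^2)) with hGdef
  set R : ℕ → Ω → ℝ := fun t ω => Q t ω + ∑ s ∈ Finset.range t, G s ω with hRdef
  -- pointwise facts
  have hβnn : ∀ t ω, 0 ≤ β t ω := fun t ω => (hβ01 t ω).1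
  have hβle1 : ∀ t ω, β t ω ≤ 1 := fun t ω => (hβ01 t ω).2
  have hI01 : ∀ t ω, I t ω = 0 ∨ I t ω = 1 := by
    intro t ω; by_cases h : (∑ s ∈ Finset.range (t+1), (β s ω)^2) ≤ K
    · right; simp [hIdef, h]
    · left; simp [hIdef, h]
  have hInn : ∀ t ω, 0 ≤ I t ω := by
    intro t ω; rcases hI01 t ω with h | h <;> rw [h] <;> norm_num
  have hIle1 : ∀ t ω, I t ω ≤ 1 := by
    intro t ω; rcases hI01 t ω with h | h <;> rw [h] <;> norm_num
  have hIcond : ∀ t ω, I t ω = 1 → (∑ s ∈ Finset.range (t+1), (β s ω)^2) ≤ K := by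
    intro t ω h
    by_contra hc
    simp only [hIdef, if_neg hc] at h
    norm_num at h
  have hImono : ∀ t s ω, s ≤ t → I t ω = 1 → I s ω = 1 := by
    intro t s ω hst h
    have h1 := hIcond t ω h
    have h2 : (∑ r ∈ Finset.range (s+1), (β r ω)^2) ≤ ∑ r ∈ Finset.range (t+1), (β r ω)^2 :=
      Finset.sum_le_sum_of_subset_of_nonneg
        (Finset.range_subset_range.2 (by omega)) (fun i _ _ => sq_nonneg _)
    simp only [hIdef, if_pos (h2.trans h1)]
  have hU_eq : ∀ t ω, I t ω = 1 → U t ω = v t ω := by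
    intro t
    induction t with
    | zero => intro ω _; rfl
    | succ t ih =>
      intro ω h
      have ht : I t ω = 1 := hImono (t+1) t ω (by omega) h
      simp only [hUdef, frz_succ, ht]
      ring
  have hU_succ_eq : ∀ t ω, I t ω = 1 → U (t+1) ω = v (t+1) ω := by
    intro t ω h
    simp only [hUdef, frz_succ, h]
    ring
  have hU_nonneg : ∀ t ω, 0 ≤ U t ω := by
    intro t
    induction t with
    | zero => intro ω; exact hv_nonneg 0 ω
    | succ t ih =>
      intro ω
      simp only [hUdef, frz_succ]
      rcases hI01 t ω with h | h <;> rw [h]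
      · simpa using ih ω
      · simpa using hv_nonneg (t+1) ω
  have hsumIβ : ∀ t ω, ∑ s ∈ Finset.range t, I s ω * (β s ω)^2 ≤ K := by
    intro t ω
    induction t with
    | zero => simpa using (Nat.cast_nonneg K : (0:ℝ) ≤ K)
    | succ t ih =>
      rw [Finset.sum_range_succ]
      rcases hI01 t ω with h | h
      · rw [h]; simpa using ih
      · calc ∑ s ∈ Finset.range t, I s ω * (β s ω)^2 + I t ω * (β t ω)^2
            = ∑ s ∈ Finset.range (t+1), I s ω * (β s ω)^2 := (Finset.sum_range_succ _ _).symm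
          _ ≤ ∑ s ∈ Finset.range (t+1), (β s ω)^2 := by
              refine Finset.sum_le_sum (fun i _ => ?_)
              calc I i ω * (β i ω)^2 ≤ 1 * (β i ω)^2 :=
                    mul_le_mul_of_nonneg_right (hIle1 i ω) (sq_nonneg _)
                _ = (β i ω)^2 := one_mul _
          _ ≤ K := hIcond t ω h
  have hfac_nn : ∀ s ω, (0:ℝ) ≤ A * (I s ω * (β s ω)^2) :=
    fun s ω => mul_nonneg hA (mul_nonneg (hInn s ω) (sq_nonneg _))
  have hpsucc : ∀ t ω, p (t+1) ω = p t ω * (1 + A * (I t ω * (β t ω)^2)) := by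
    intro t ω; exact Finset.prod_range_succ _ _
  have hp1 : ∀ t ω, 1 ≤ p t ω := by
    intro t ω
    induction t with
    | zero => simp [hpdef]
    | succ t ih => rw [hpsucc]; nlinarith [hfac_nn t ω]
  have hppos : ∀ t ω, 0 < p t ω := fun t ω => lt_of_lt_of_le one_pos (hp1 t ω)
  have hpexp : ∀ t ω, p t ω ≤ Real.exp (A * K) := by
    intro t ω
    calc p t ω ≤ ∏ s ∈ Finset.range t, Real.exp (A * (I s ω * (β s ω)^2)) := by
          refine Finset.prod_le_prod (fun s _ => by linarith [hfac_nn s ω]) (fun s _ => ?_)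
          linarith [Real.add_one_le_exp (A * (I s ω * (β s ω)^2))]
      _ = Real.exp (∑ s ∈ Finset.range t, A * (I s ω * (β s ω)^2)) :=
          (Real.exp_sum _ _).symm
      _ ≤ Real.exp (A * K) := by
          apply Real.exp_le_exp.2
          rw [← Finset.mul_sum]
          exact mul_le_mul_of_nonneg_left (hsumIβ t ω) hA
  -- measurability
  have hSM_I : ∀ t, StronglyMeasurable[ℱ t] (I t) := by
    intro t
    have hg : StronglyMeasurable[ℱ t] (fun ω => ∑ s ∈ Finset.range (t+1), (β s ω)^2) := by
      refine Finset.stronglyMeasurable_fun_sum _ (fun s hs => ?_)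
      have hst : s ≤ t := by
        have := Finset.mem_range.1 hs; omega
      exact ((hβ_meas s).mono (ℱ.mono hst)).pow 2
    have hset : MeasurableSet[ℱ t]
        {ω | (∑ s ∈ Finset.range (t+1), (β s ω)^2) ≤ (K:ℝ)} :=
      hg.measurable measurableSet_Iic
    exact (Measurable.ite hset measurable_const measurable_const).stronglyMeasurable
  have hSM_p : ∀ n t, n ≤ t + 1 → StronglyMeasurable[ℱ t] (p n) := by
    intro n t hn
    refine Finset.stronglyMeasurable_fun_prod _ (fun s hs => ?_)
    have hst : s ≤ t := by have := Finset.mem_range.1 hs; omega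
    have h1 : StronglyMeasurable[ℱ t] (I s) := (hSM_I s).mono (ℱ.mono hst)
    have h2 : StronglyMeasurable[ℱ t] (β s) := (hβ_meas s).mono (ℱ.mono hst)
    exact stronglyMeasurable_const.add
      (stronglyMeasurable_const.mul (h1.mul (h2.pow 2)))
  have hSM_U : ∀ t, StronglyMeasurable[ℱ t] (U t) := by
    intro t
    induction t with
    | zero => exact hv_meas 0
    | succ t ih =>
      have : U (t+1) = fun ω => I t ω * v (t+1) ω + (1 - I t ω) * U t ω := rfl
      rw [this]
      exact (((hSM_I t).mono (ℱ.mono t.le_succ)).mul (hv_meas (t+1))).add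
        ((stronglyMeasurable_const.sub ((hSM_I t).mono (ℱ.mono t.le_succ))).mul
          (ih.mono (ℱ.mono t.le_succ)))
  have hSM_pinv : ∀ n t, n ≤ t + 1 → StronglyMeasurable[ℱ t] (fun ω => (p n ω)⁻¹) :=
    fun n t hn => ((hSM_p n t hn).measurable.inv).stronglyMeasurable
  have hSM_Q : ∀ t, StronglyMeasurable[ℱ t] (Q t) :=
    fun t => (hSM_pinv t t (by omega)).mul (hSM_U t)
  have hSM_G : ∀ s, StronglyMeasurable[ℱ s] (G s) := by
    intro s
    refine (hSM_pinv (s+1) s le_rfl).mul ?_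
    exact (((hSM_I s).mul (hβ_meas s)).mul (hv_meas s)).sub
      (stronglyMeasurable_const.mul ((hSM_I s).mul ((hβ_meas s).pow 2)))
  have hSM_R : ∀ t, StronglyMeasurable[ℱ t] (R t) := by
    intro t
    refine (hSM_Q t).add ?_
    refine Finset.stronglyMeasurable_fun_sum _ (fun s hs => ?_)
    have hst : s ≤ t := by have := Finset.mem_range.1 hs; omega
    exact (hSM_G s).mono (ℱ.mono hst)
  -- integrability
  have haesm : ∀ {f : Ω → ℝ} {t : ℕ}, StronglyMeasurable[ℱ t] f → AEStronglyMeasurable f P :=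
    fun {f} {t} h => (h.mono (ℱ.le t)).aestronglyMeasurable
  have hint_U : ∀ t, Integrable (U t) P := by
    intro t
    induction t with
    | zero => exact hv_int 0
    | succ t ih =>
      have : U (t+1) = fun ω => I t ω * v (t+1) ω + (1 - I t ω) * U t ω := rfl
      rw [this]
      refine Integrable.add ?_ ?_
      · refine Integrable.bdd_mul (hv_int (t+1)) (haesm (hSM_I t)) (c := 1) (Filter.Eventually.of_forall fun ω => ?_)
        rw [Real.norm_eq_abs, abs_of_nonneg (hInn t ω)]; exact hIle1 t ω
      · refine Integrable.bdd_mul ih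
          (aestronglyMeasurable_const.sub (haesm (hSM_I t))) (c := 1) (Filter.Eventually.of_forall fun ω => ?_)
        rw [Real.norm_eq_abs, abs_of_nonneg (by linarith [hIle1 t ω])]
        linarith [hInn t ω]
  have hpinv_bdd : ∀ n ω, ‖(p n ω)⁻¹‖ ≤ 1 := by
    intro n ω
    rw [Real.norm_eq_abs, abs_of_nonneg (inv_nonneg.2 (hppos n ω).le)]
    exact inv_le_one_of_one_le₀ (hp1 n ω)
  have hint_Q : ∀ t, Integrable (Q t) P := by
    intro t
    exact Integrable.bdd_mul (hint_U t) (haesm (hSM_pinv t t (by omega))) (c := 1) (Filter.Eventually.of_forall (hpinv_bdd t))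
  have hint_G : ∀ s, Integrable (G s) P := by
    intro s
    refine Integrable.bdd_mul ?_ (haesm (hSM_pinv (s+1) s le_rfl)) (c := 1) (Filter.Eventually.of_forall (hpinv_bdd (s+1)))
    refine Integrable.sub ?_ ?_
    · refine Integrable.bdd_mul (hv_int s) (haesm ((hSM_I s).mul (hβ_meas s))) (c := 1) (Filter.Eventually.of_forall fun ω => ?_)
      rw [Real.norm_eq_abs, abs_of_nonneg (mul_nonneg (hInn s ω) (hβnn s ω))]
      calc I s ω * β s ω ≤ 1 * 1 :=
        mul_le_mul (hIle1 s ω) (hβle1 s ω) (hβnn s ω) zero_le_one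
      _ = 1 := one_mul 1
    · refine (integrable_const (B * 1)).mono' (haesm
        (stronglyMeasurable_const.mul ((hSM_I s).mul ((hβ_meas s).pow 2)))) ?_
      refine Filter.Eventually.of_forall (fun ω => ?_)
      have h1 : I s ω * (β s ω)^2 ≤ 1 := by
        calc I s ω * (β s ω)^2 ≤ 1 * 1 := by
              refine mul_le_mul (hIle1 s ω) ?_ (sq_nonneg _) zero_le_one
              calc (β s ω)^2 ≤ 1^2 := by
                    refine pow_le_pow_left₀ (hβnn s ω) (hβle1 s ω) 2
                _ = 1 := one_pow 2
          _ = 1 := one_mul 1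
      rw [Real.norm_eq_abs, abs_of_nonneg (mul_nonneg hB (mul_nonneg (hInn s ω) (sq_nonneg _)))]
      exact mul_le_mul_of_nonneg_left h1 hB
  have hint_R : ∀ t, Integrable (R t) P := by
    intro t
    exact (hint_Q t).add (integrable_finset_sum _ (fun s _ => hint_G s))
  -- conditional expectation drift for U
  have hcond_U : ∀ t, P[U (t+1) | ℱ t] ≤ᵐ[P] fun ω =>
      (1 + A * (I t ω * (β t ω)^2)) * U t ω - I t ω * β t ω * v t ω
        + B * (I t ω * (β t ω)^2) := by
    intro t
    have hdecomp : U (t+1) =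
        (fun ω => I t ω * v (t+1) ω) + (fun ω => (1 - I t ω) * U t ω) := by
      funext ω; rfl
    have hint1 : Integrable (fun ω => I t ω * v (t+1) ω) P := by
      refine Integrable.bdd_mul (hv_int (t+1)) (haesm (hSM_I t)) (c := 1) (Filter.Eventually.of_forall fun ω => ?_)
      rw [Real.norm_eq_abs, abs_of_nonneg (hInn t ω)]; exact hIle1 t ω
    have hint2 : Integrable (fun ω => (1 - I t ω) * U t ω) P := by
      refine Integrable.bdd_mul (hint_U t)
        (aestronglyMeasurable_const.sub (haesm (hSM_I t))) (c := 1) (Filter.Eventually.of_forall fun ω => ?_)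
      rw [Real.norm_eq_abs, abs_of_nonneg (by linarith [hIle1 t ω])]
      linarith [hInn t ω]
    have h1 : P[U (t+1) | ℱ t] =ᵐ[P]
        P[(fun ω => I t ω * v (t+1) ω) | ℱ t] + P[(fun ω => (1 - I t ω) * U t ω) | ℱ t] := by
      rw [hdecomp]; exact condExp_add hint1 hint2 _
    have h2 : P[(fun ω => I t ω * v (t+1) ω) | ℱ t] =ᵐ[P]
        fun ω => I t ω * (P[v (t+1) | ℱ t]) ω := by
      exact condExp_mul_of_stronglyMeasurable_left (hSM_I t) hint1 (hv_int (t+1))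
    have h3 : P[(fun ω => (1 - I t ω) * U t ω) | ℱ t] =ᵐ[P]
        fun ω => (1 - I t ω) * U t ω :=
      (condExp_of_stronglyMeasurable (ℱ.le t)
        ((stronglyMeasurable_const.sub (hSM_I t)).mul (hSM_U t)) hint2).symm ▸
        EventuallyEq.rfl
    filter_upwards [h1, h2, h3, hdrift t] with ω h1ω h2ω h3ω hdω
    rw [h1ω]
    simp only [Pi.add_apply]
    rw [h2ω, h3ω]
    rcases hI01 t ω with h | h
    · rw [h]; ring_nf; exact le_refl _
    · rw [h, hU_eq t ω h]
      have hXle : (P[v (t+1) | ℱ t]) ω ≤ (1 - β t ω) * v t ω + (β t ω)^2 * (A * v t ω + B) := hdω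
      nlinarith [hXle]
  -- conditional expectation drift for Q
  have hcond_Q : ∀ t, P[Q (t+1) | ℱ t] ≤ᵐ[P] fun ω => Q t ω - G t ω := by
    intro t
    have hq : Q (t+1) = fun ω => (p (t+1) ω)⁻¹ * U (t+1) ω := rfl
    have h2 : P[Q (t+1) | ℱ t] =ᵐ[P] fun ω => (p (t+1) ω)⁻¹ * (P[U (t+1) | ℱ t]) ω := by
      rw [hq]
      exact condExp_mul_of_stronglyMeasurable_left (hSM_pinv (t+1) t le_rfl) (hint_Q (t+1))
        (hint_U (t+1))
    filter_upwards [h2, hcond_U t] with ω h2ω hUω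
    rw [h2ω]
    have hkey : (p (t+1) ω)⁻¹ *
        ((1 + A * (I t ω * (β t ω)^2)) * U t ω - I t ω * β t ω * v t ω
          + B * (I t ω * (β t ω)^2)) = Q t ω - G t ω := by
      have hps := hpsucc t ω
      have hne1 : p t ω ≠ 0 := (hppos t ω).ne'
      have hne2 : (1 + A * (I t ω * (β t ω)^2)) ≠ 0 := by
        have := hfac_nn t ω; intro hcon; linarith
      have hne3 : p (t+1) ω ≠ 0 := (hppos (t+1) ω).ne'
      simp only [hQdef, hGdef]
      rw [hps]
      rw [mul_inv]
      have hc : (1 + A * (I t ω * (β t ω)^2))⁻¹ * (1 + A * (I t ω * (β t ω)^2)) = 1 :=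
        inv_mul_cancel₀ hne2
      linear_combination (p t ω)⁻¹ * U t ω * hc
    rw [← hkey]
    exact mul_le_mul_of_nonneg_left hUω (inv_nonneg.2 (hppos (t+1) ω).le)
  -- R is a supermartingale
  have hadapted : StronglyAdapted ℱ R := fun t => hSM_R t
  have hsuper : Supermartingale R ℱ P := by
    refine supermartingale_nat hadapted hint_R (fun t => ?_)
    have hdecomp : R (t+1) = Q (t+1) + (fun ω => ∑ s ∈ Finset.range (t+1), G s ω) := by
      funext ω; rfl
    have hintsum : Integrable (fun ω => ∑ s ∈ Finset.range (t+1), G s ω) P :=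
      integrable_finset_sum _ (fun s _ => hint_G s)
    have h1 : P[R (t+1) | ℱ t] =ᵐ[P]
        P[Q (t+1) | ℱ t] + P[(fun ω => ∑ s ∈ Finset.range (t+1), G s ω) | ℱ t] := by
      rw [hdecomp]; exact condExp_add (hint_Q (t+1)) hintsum _
    have hSMsum : StronglyMeasurable[ℱ t] (fun ω => ∑ s ∈ Finset.range (t+1), G s ω) := by
      refine Finset.stronglyMeasurable_fun_sum _ (fun s hs => ?_)
      have hst : s ≤ t := by have := Finset.mem_range.1 hs; omega
      exact (hSM_G s).mono (ℱ.mono hst)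
    have h3 : P[(fun ω => ∑ s ∈ Finset.range (t+1), G s ω) | ℱ t] =ᵐ[P]
        fun ω => ∑ s ∈ Finset.range (t+1), G s ω :=
      (condExp_of_stronglyMeasurable (ℱ.le t) hSMsum hintsum).symm ▸ EventuallyEq.rfl
    filter_upwards [h1, h3, hcond_Q t] with ω h1ω h3ω hQω
    rw [h1ω]
    simp only [Pi.add_apply]
    rw [h3ω]
    have : R t ω = Q t ω + ∑ s ∈ Finset.range t, G s ω := rfl
    rw [this, Finset.sum_range_succ]
    linarith [hQω]
  -- lower bound on R
  have hQnn : ∀ t ω, 0 ≤ Q t ω :=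
    fun t ω => mul_nonneg (inv_nonneg.2 (hppos t ω).le) (hU_nonneg t ω)
  have hG_lb : ∀ s ω, -(B * (I s ω * (β s ω)^2)) ≤ G s ω := by
    intro s ω
    have h1 : 0 ≤ (p (s+1) ω)⁻¹ * (I s ω * β s ω * v s ω) :=
      mul_nonneg (inv_nonneg.2 (hppos (s+1) ω).le)
        (mul_nonneg (mul_nonneg (hInn s ω) (hβnn s ω)) (hv_nonneg s ω))
    have h2 : (p (s+1) ω)⁻¹ * (B * (I s ω * (β s ω)^2)) ≤ B * (I s ω * (β s ω)^2) := by
      have hx : 0 ≤ B * (I s ω * (β s ω)^2) :=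
        mul_nonneg hB (mul_nonneg (hInn s ω) (sq_nonneg _))
      calc (p (s+1) ω)⁻¹ * (B * (I s ω * (β s ω)^2)) ≤ 1 * (B * (I s ω * (β s ω)^2)) :=
            mul_le_mul_of_nonneg_right
              (inv_le_one_of_one_le₀ (hp1 (s+1) ω)) hx
        _ = B * (I s ω * (β s ω)^2) := one_mul _
    have : G s ω = (p (s+1) ω)⁻¹ * (I s ω * β s ω * v s ω)
        - (p (s+1) ω)⁻¹ * (B * (I s ω * (β s ω)^2)) := by
      simp only [hGdef]; ring
    rw [this]
    linarith
  have hR_lb : ∀ t ω, -(B * K) ≤ R t ω := by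
    intro t ω
    have hsum : -(B * K) ≤ ∑ s ∈ Finset.range t, G s ω := by
      calc -(B * K) ≤ -(B * ∑ s ∈ Finset.range t, I s ω * (β s ω)^2) := by
            have := hsumIβ t ω
            have : B * (∑ s ∈ Finset.range t, I s ω * (β s ω)^2) ≤ B * K :=
              mul_le_mul_of_nonneg_left this hB
            linarith
        _ = ∑ s ∈ Finset.range t, -(B * (I s ω * (β s ω)^2)) := by
            rw [Finset.mul_sum, ← Finset.sum_neg_distrib]
        _ ≤ ∑ s ∈ Finset.range t, G s ω := Finset.sum_le_sum (fun s _ => hG_lb s ω)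
    have : R t ω = Q t ω + ∑ s ∈ Finset.range t, G s ω := rfl
    rw [this]
    linarith [hQnn t ω]
  -- L¹ boundedness
  have hBK : (0:ℝ) ≤ B * K := mul_nonneg hB (Nat.cast_nonneg K)
  have hERle : ∀ t, ∫ ω, R t ω ∂P ≤ ∫ ω, R 0 ω ∂P := by
    intro t
    have := hsuper.setIntegral_le (Nat.zero_le t) (@MeasurableSet.univ Ω (ℱ 0))
    simpa [setIntegral_univ] using this
  have hL1abs : ∀ t, ∫ ω, |R t ω| ∂P ≤ (∫ ω, R 0 ω ∂P) + 2 * (B * K) := by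
    intro t
    have hptw : ∀ ω, |R t ω| ≤ R t ω + 2 * (B * K) := by
      intro ω
      rcases abs_cases (R t ω) with ⟨h1, h2⟩ | ⟨h1, h2⟩
      · linarith
      · linarith [hR_lb t ω]
    calc ∫ ω, |R t ω| ∂P ≤ ∫ ω, (R t ω + 2 * (B * K)) ∂P := by
          refine integral_mono (hint_R t).abs ((hint_R t).add (integrable_const _)) hptw
      _ = (∫ ω, R t ω ∂P) + 2 * (B * K) := by
          rw [integral_add (hint_R t) (integrable_const _), integral_const]
          simp
      _ ≤ (∫ ω, R 0 ω ∂P) + 2 * (B * K) := by linarith [hERle t]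
  have hsub : Submartingale (-R) ℱ P := hsuper.neg
  have hbdd : ∀ t, eLpNorm ((-R) t) 1 P ≤
      ((∫ ω, R 0 ω ∂P) + 2 * (B * K)).toNNReal := by
    intro t
    have hint' : Integrable ((-R) t) P := (hint_R t).neg
    rw [eLpNorm_one_eq_lintegral_enorm,
      ← ofReal_integral_norm_eq_lintegral_enorm hint']
    have : ∫ ω, ‖(-R) t ω‖ ∂P = ∫ ω, |R t ω| ∂P := by
      congr 1; funext ω; simp [Real.norm_eq_abs]
    rw [this]
    calc ENNReal.ofReal (∫ ω, |R t ω| ∂P)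
        ≤ ENNReal.ofReal ((∫ ω, R 0 ω ∂P) + 2 * (B * K)) :=
          ENNReal.ofReal_le_ofReal (hL1abs t)
      _ = (((∫ ω, R 0 ω ∂P) + 2 * (B * K)).toNNReal : ℝ≥0∞) := rfl
  have hconv : ∀ᵐ ω ∂P, ∃ c, Tendsto (fun n => (-R) n ω) atTop (𝓝 c) :=
    hsub.exists_ae_tendsto_of_bdd hbdd
  -- pointwise endgame
  filter_upwards [hconv] with ω hcω hK hβdiv
  obtain ⟨c, hc⟩ := hcω
  have hRtend : Tendsto (fun t => R t ω) atTop (𝓝 (-c)) := by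
    have h := hc.neg
    simp only [Pi.neg_apply, neg_neg] at h
    exact h
  have hIone : ∀ t, I t ω = 1 := by
    intro t
    simp only [hIdef, if_pos (hK (t+1))]
  have hUv : ∀ t, U t ω = v t ω := fun t => hU_eq t ω (hIone t)
  have hβsq_sum : Summable (fun s => (β s ω)^2) :=
    summable_of_sum_range_le (fun s => sq_nonneg _) hK
  set a : ℕ → ℝ := fun s => (p (s+1) ω)⁻¹ * (β s ω * v s ω) with hadef
  set b : ℕ → ℝ := fun s => (p (s+1) ω)⁻¹ * (B * (β s ω)^2) with hbdef
  have hGab : ∀ s, G s ω = a s - b s := by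
    intro s
    simp only [hGdef, hadef, hbdef, hIone s]
    ring
  have hann : ∀ s, 0 ≤ a s := fun s =>
    mul_nonneg (inv_nonneg.2 (hppos (s+1) ω).le) (mul_nonneg (hβnn s ω) (hv_nonneg s ω))
  have hbnn : ∀ s, 0 ≤ b s := fun s =>
    mul_nonneg (inv_nonneg.2 (hppos (s+1) ω).le) (mul_nonneg hB (sq_nonneg _))
  have hble : ∀ s, b s ≤ B * (β s ω)^2 := by
    intro s
    calc b s ≤ 1 * (B * (β s ω)^2) :=
          mul_le_mul_of_nonneg_right (inv_le_one_of_one_le₀ (hp1 (s+1) ω))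
            (mul_nonneg hB (sq_nonneg _))
      _ = B * (β s ω)^2 := one_mul _
  have hbsum : Summable b := Summable.of_nonneg_of_le hbnn hble (hβsq_sum.mul_left B)
  have hbtend : Tendsto (fun t => ∑ s ∈ Finset.range t, b s) atTop (𝓝 (∑' s, b s)) :=
    hbsum.hasSum.tendsto_sum_nat
  have hQa : Tendsto (fun t => Q t ω + ∑ s ∈ Finset.range t, a s) atTop
      (𝓝 (-c + ∑' s, b s)) := by
    have heq : (fun t => Q t ω + ∑ s ∈ Finset.range t, a s)
        = fun t => R t ω + ∑ s ∈ Finset.range t, b s := by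
      funext t
      have hR : R t ω = Q t ω + ∑ s ∈ Finset.range t, G s ω := rfl
      rw [hR, Finset.sum_congr rfl (fun s _ => hGab s), Finset.sum_sub_distrib]
      ring
    rw [heq]
    exact hRtend.add hbtend
  have hasum : Summable a := by
    obtain ⟨C, hC⟩ := hQa.bddAbove_range
    refine summable_of_sum_range_le (c := C) hann (fun t => ?_)
    have h1 : Q t ω + ∑ s ∈ Finset.range t, a s ≤ C := hC (Set.mem_range_self t)
    linarith [hQnn t ω]
  have hatend : Tendsto (fun t => ∑ s ∈ Finset.range t, a s) atTop (𝓝 (∑' s, a s)) :=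
    hasum.hasSum.tendsto_sum_nat
  have hQtend : Tendsto (fun t => Q t ω) atTop (𝓝 (-c + ∑' s, b s - ∑' s, a s)) := by
    have heq : (fun t => Q t ω)
        = fun t => (Q t ω + ∑ s ∈ Finset.range t, a s) - ∑ s ∈ Finset.range t, a s := by
      funext t; ring
    rw [heq]
    exact hQa.sub hatend
  have hpmono : Monotone (fun t => p t ω) := by
    refine monotone_nat_of_le_succ (fun t => ?_)
    rw [hpsucc]
    nlinarith [hfac_nn t ω, hppos t ω]
  have hpbdd : BddAbove (Set.range (fun t => p t ω)) := by
    refine ⟨Real.exp (A * K), ?_⟩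
    rintro y ⟨t, rfl⟩
    exact hpexp t ω
  have hptend : Tendsto (fun t => p t ω) atTop (𝓝 (⨆ t, p t ω)) :=
    tendsto_atTop_ciSup hpmono hpbdd
  have hPinf1 : 1 ≤ ⨆ t, p t ω := by
    have h0 : p 0 ω ≤ ⨆ t, p t ω := le_ciSup hpbdd 0
    have h1 : p 0 ω = 1 := by simp [hpdef]
    linarith
  have hv_eq : ∀ t, v t ω = Q t ω * p t ω := by
    intro t
    have : Q t ω = (p t ω)⁻¹ * U t ω := rfl
    rw [this, hUv t]
    rw [inv_mul_eq_div, div_mul_cancel₀ _ (hppos t ω).ne']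
  have hvtend : Tendsto (fun t => v t ω) atTop
      (𝓝 ((-c + ∑' s, b s - ∑' s, a s) * (⨆ t, p t ω))) := by
    have heq : (fun t => v t ω) = fun t => Q t ω * p t ω := funext hv_eq
    rw [heq]
    exact hQtend.mul hptend
  set L := (-c + ∑' s, b s - ∑' s, a s) * (⨆ t, p t ω) with hLdef
  have hLnn : 0 ≤ L := ge_of_tendsto' hvtend (fun t => hv_nonneg t ω)
  have hL0 : L = 0 := by
    by_contra hL
    have hLpos : 0 < L := lt_of_le_of_ne hLnn (Ne.symm hL)
    have hev : ∀ᶠ t in atTop, L/2 < v t ω :=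
      hvtend.eventually (lt_mem_nhds (half_lt_self hLpos))
    obtain ⟨T, hT⟩ := eventually_atTop.1 hev
    have hexp_pos : (0:ℝ) < Real.exp (A * K) := Real.exp_pos _
    have hCbound : ∀ s, T ≤ s → β s ω ≤ (Real.exp (A * K) * (2 / L)) * a s := by
      intro s hs
      have hv2 : L/2 ≤ v s ω := (hT s hs).le
      have hp' : (Real.exp (A * K))⁻¹ ≤ (p (s+1) ω)⁻¹ := by
        apply inv_anti₀ (hppos (s+1) ω) (hpexp (s+1) ω)
      have hstep1 : β s ω * (L/2) ≤ β s ω * v s ω :=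
        mul_le_mul_of_nonneg_left hv2 (hβnn s ω)
      have hstep2 : (Real.exp (A * K))⁻¹ * (β s ω * (L/2)) ≤ a s := by
        calc (Real.exp (A * K))⁻¹ * (β s ω * (L/2))
            ≤ (Real.exp (A * K))⁻¹ * (β s ω * v s ω) :=
              mul_le_mul_of_nonneg_left hstep1 (inv_nonneg.2 hexp_pos.le)
          _ ≤ (p (s+1) ω)⁻¹ * (β s ω * v s ω) :=
              mul_le_mul_of_nonneg_right hp' (mul_nonneg (hβnn s ω) (hv_nonneg s ω))
      have hgoal : β s ω = (Real.exp (A * K) * (2 / L)) *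
          ((Real.exp (A * K))⁻¹ * (β s ω * (L/2))) := by
        field_simp
      rw [hgoal]
      exact mul_le_mul_of_nonneg_left hstep2
        (mul_nonneg hexp_pos.le (by positivity))
    have h1 : Summable (fun s => a (s + T)) := (summable_nat_add_iff T).2 hasum
    have h2 : Summable (fun s => β (s + T) ω) := by
      refine Summable.of_nonneg_of_le (fun s => hβnn _ ω) (fun s => hCbound (s + T) (by omega))
        (h1.mul_left _)
    exact hβdiv ((summable_nat_add_iff T).1 h2)
  rw [hLdef] at hL0
  rw [← hL0]
  exact hvtend

lemma rs_main {m : MeasurableSpace Ω} {P : Measure Ω} [IsProbabilityMeasure P]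
    (ℱ : Filtration ℕ m) (v β : ℕ → Ω → ℝ)
    (hv_meas : ∀ t, StronglyMeasurable[ℱ t] (v t))
    (hβ_meas : ∀ t, StronglyMeasurable[ℱ t] (β t))
    (hv_int : ∀ t, Integrable (v t) P)
    (hv_nonneg : ∀ t ω, 0 ≤ v t ω)
    (hβ01 : ∀ t ω, β t ω ∈ Set.Icc (0:ℝ) 1)
    (A B : ℝ) (hA : 0 ≤ A) (hB : 0 ≤ B)
    (hdrift : ∀ t, P[v (t+1) | ℱ t] ≤ᵐ[P]
        fun ω => (1 - β t ω) * v t ω + (β t ω)^2 * (A * v t ω + B)) :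
    ∀ᵐ ω ∂P, Summable (fun t => (β t ω)^2) → ¬ Summable (fun t => β t ω) →
      Tendsto (fun t => v t ω) atTop (𝓝 0) := by
  have h : ∀ᵐ ω ∂P, ∀ K : ℕ, (∀ t, ∑ s ∈ Finset.range t, (β s ω)^2 ≤ K) →
      ¬ Summable (fun t => β t ω) → Tendsto (fun t => v t ω) atTop (𝓝 0) :=
    ae_all_iff.2 (fun K => rs_aux ℱ v β hv_meas hβ_meas hv_int hv_nonneg hβ01 A B hA hB hdrift K)
  filter_upwards [h] with ω hω hsum hdiv
  refine hω ⌈∑' s, (β s ω)^2⌉₊ (fun t => ?_) hdiv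
  calc ∑ s ∈ Finset.range t, (β s ω)^2 ≤ ∑' s, (β s ω)^2 :=
        Summable.sum_le_tsum _ (fun s _ => sq_nonneg _) hsum
    _ ≤ ⌈∑' s, (β s ω)^2⌉₊ := Nat.le_ceil _

lemma truncated_key
    {m : MeasurableSpace Ω} {P : Measure Ω} [IsProbabilityMeasure P]
    (ℱ : Filtration ℕ m) (x w η : ℕ → Ω → ℝ)
    (hx_meas : ∀ t : ℕ, StronglyMeasurable[ℱ t] (x (t + 1)))
    (hη_meas : ∀ t : ℕ, StronglyMeasurable[ℱ t] (η (t + 1)))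
    (hw_int : ∀ t : ℕ, Integrable (w t) P)
    (hw_sq_int : ∀ t : ℕ, Integrable (fun ω => (w t ω) ^ 2) P)
    (hrec : ∀ t : ℕ, ∀ ω, x (t + 1) ω = (1 - η t ω) * x t ω + η t ω * w t ω)
    (A B : ℝ) (hA : 0 ≤ A) (hB : 0 ≤ B)
    (hmoment : ∀ t : ℕ,
      ∀ᵐ ω ∂P, (P[(fun ω => (w (t + 1) ω) ^ 2) | ℱ t]) ω ≤ A * |x (t + 1) ω| ^ 2 + B)
    (hmean : ∀ t : ℕ, ∀ᵐ ω ∂P, (P[w (t + 1) | ℱ t]) ω = 0)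
    (hη01 : ∀ t : ℕ, ∀ ω, η t ω ∈ Set.Icc (0 : ℝ) 1)
    (M : ℕ) :
    ∀ᵐ ω ∂P, (|x 1 ω| ≤ (M:ℝ) → Summable (fun t => (η (t+1) ω)^2) →
      ¬ Summable (fun t => η (t+1) ω) →
      Tendsto (fun t => x t ω) atTop (𝓝 (0:ℝ))) := by
  classical
  set S : Set Ω := {ω | |x 1 ω| ≤ (M:ℝ)} with hSdef
  have hSmeas : MeasurableSet[ℱ 0] S := by
    have h1 : Measurable[ℱ 0] (fun ω => |x 1 ω|) :=
      measurable_abs.comp (hx_meas 0).measurable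
    exact h1 measurableSet_Iic
  set χ : Ω → ℝ := S.indicator (fun _ => (1:ℝ)) with hχdef
  have hχ01 : ∀ ω, χ ω = 0 ∨ χ ω = 1 := by
    intro ω
    by_cases h : ω ∈ S
    · right; simp [hχdef, Set.indicator_of_mem h]
    · left; simp [hχdef, Set.indicator_of_notMem h]
  have hχnn : ∀ ω, 0 ≤ χ ω := by
    intro ω; rcases hχ01 ω with h | h <;> rw [h] <;> norm_num
  have hχle1 : ∀ ω, χ ω ≤ 1 := by
    intro ω; rcases hχ01 ω with h | h <;> rw [h] <;> norm_num
  have hχidem : ∀ ω, χ ω * χ ω = χ ω := by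
    intro ω; rcases hχ01 ω with h | h <;> rw [h] <;> norm_num
  have hχmem : ∀ ω, ω ∈ S → χ ω = 1 := fun ω h => by
    simp [hχdef, Set.indicator_of_mem h]
  have hχ_meas : StronglyMeasurable[ℱ 0] χ :=
    (stronglyMeasurable_const.indicator hSmeas)
  have hχ_bd : ∀ ω, ‖χ ω‖ ≤ 1 := by
    intro ω; rw [Real.norm_eq_abs, abs_of_nonneg (hχnn ω)]; exact hχle1 ω
  set y : ℕ → Ω → ℝ := fun t ω => χ ω * x (t+1) ω with hydef
  set u : ℕ → Ω → ℝ := fun t ω => χ ω * w (t+1) ω with hudef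
  set β : ℕ → Ω → ℝ := fun t ω => η (t+1) ω with hβdef
  set v : ℕ → Ω → ℝ := fun t ω => (y t ω)^2 with hvdef
  have hβnn : ∀ t ω, 0 ≤ β t ω := fun t ω => (hη01 (t+1) ω).1
  have hβle1 : ∀ t ω, β t ω ≤ 1 := fun t ω => (hη01 (t+1) ω).2
  have hχ_measT : ∀ t : ℕ, StronglyMeasurable[ℱ t] χ :=
    fun t => hχ_meas.mono (ℱ.mono (Nat.zero_le t))
  have hy_meas : ∀ t, StronglyMeasurable[ℱ t] (y t) :=
    fun t => (hχ_measT t).mul (hx_meas t)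
  have hv_meas : ∀ t, StronglyMeasurable[ℱ t] (v t) := fun t => (hy_meas t).pow 2
  have hw_aesm : ∀ t, AEStronglyMeasurable (w t) P := fun t => (hw_int t).1
  have hw2 : ∀ t, MemLp (w t) 2 P :=
    fun t => (memLp_two_iff_integrable_sq (hw_aesm t)).2 (hw_sq_int t)
  have hu2 : ∀ t, MemLp (u t) 2 P := by
    intro t
    refine MemLp.of_le ((hw2 (t+1)).norm) ?_ ?_
    · exact ((hχ_measT 0).mono (ℱ.le 0)).aestronglyMeasurable.mul (hw_aesm (t+1))
    · refine Filter.Eventually.of_forall (fun ω => ?_)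
      show ‖χ ω * w (t+1) ω‖ ≤ ‖‖w (t+1) ω‖‖
      rw [norm_norm, Real.norm_eq_abs, Real.norm_eq_abs, abs_mul]
      calc |χ ω| * |w (t+1) ω| ≤ 1 * |w (t+1) ω| :=
            mul_le_mul_of_nonneg_right (by rw [abs_of_nonneg (hχnn ω)]; exact hχle1 ω)
              (abs_nonneg _)
        _ = |w (t+1) ω| := one_mul _
  have hy_rec : ∀ t ω, y (t+1) ω = (1 - β t ω) * y t ω + β t ω * u t ω := by
    intro t ω
    simp only [hydef, hudef, hβdef]
    rw [hrec (t+1) ω]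
    ring
  have hy2 : ∀ t, MemLp (y t) 2 P := by
    intro t
    induction t with
    | zero =>
      refine MemLp.of_bound
        (((hy_meas 0).mono (ℱ.le 0)).aestronglyMeasurable) (M:ℝ) ?_
      refine Filter.Eventually.of_forall (fun ω => ?_)
      simp only [hydef, Real.norm_eq_abs, abs_mul]
      by_cases h : ω ∈ S
      · rw [hχmem ω h, abs_one, one_mul]
        exact h
      · simp [hχdef, Set.indicator_of_notMem h]
    | succ t ih =>
      refine MemLp.of_le (ih.norm.add (hu2 t).norm) ?_ ?_
      · exact ((hy_meas (t+1)).mono (ℱ.le (t+1))).aestronglyMeasurable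
      · refine Filter.Eventually.of_forall (fun ω => ?_)
        rw [hy_rec t ω]
        simp only [Real.norm_eq_abs, Pi.add_apply, norm_norm]
        have h1 : |(1 - β t ω) * y t ω + β t ω * u t ω| ≤
            (1 - β t ω) * |y t ω| + β t ω * |u t ω| := by
          have hb1 : (0:ℝ) ≤ 1 - β t ω := by linarith [hβle1 t ω]
          have e1 := le_abs_self (y t ω)
          have e2 := neg_abs_le (y t ω)
          have e3 := le_abs_self (u t ω)
          have e4 := neg_abs_le (u t ω)
          rw [abs_le]
          constructor <;> nlinarith [hβnn t ω]
        have h2 : (1 - β t ω) * |y t ω| ≤ |y t ω| := by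
          nlinarith [abs_nonneg (y t ω), hβnn t ω]
        have h3 : β t ω * |u t ω| ≤ |u t ω| := by
          nlinarith [abs_nonneg (u t ω), hβle1 t ω]
        have h4 : (0:ℝ) ≤ |y t ω| + |u t ω| := by positivity
        rw [abs_of_nonneg h4]
        linarith
  have hv_int : ∀ t, Integrable (v t) P := fun t => (hy2 t).integrable_sq
  have hu_int : ∀ t, Integrable (u t) P := fun t => (hu2 t).integrable one_le_two
  have hcond_u : ∀ t, P[u t | ℱ t] =ᵐ[P] (fun _ => (0:ℝ)) := by
    intro t
    have hprod : u t = (fun ω => χ ω) * (w (t+1)) := rfl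
    have h1 : P[u t | ℱ t] =ᵐ[P] fun ω => χ ω * (P[w (t+1) | ℱ t]) ω := by
      rw [hprod]
      exact condExp_mul_of_stronglyMeasurable_left (hχ_measT t) (hu_int t) (hw_int (t+1))
    filter_upwards [h1, hmean t] with ω h1ω h2ω
    rw [h1ω, h2ω, mul_zero]
  have hdrift : ∀ t, P[v (t+1) | ℱ t] ≤ᵐ[P]
      fun ω => (1 - β t ω) * v t ω + (β t ω)^2 * (A * v t ω + B) := by
    intro t
    set f1 : Ω → ℝ := fun ω => (1 - β t ω)^2 * v t ω with hf1
    set f2 : Ω → ℝ := fun ω => (2 * (1 - β t ω) * β t ω * y t ω) * u t ω with hf2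
    set f3 : Ω → ℝ := fun ω => ((β t ω)^2 * χ ω) * ((w (t+1) ω)^2) with hf3
    have hsplit : v (t+1) = f1 + f2 + f3 := by
      funext ω
      simp only [hf1, hf2, hf3, Pi.add_apply, hvdef]
      rw [hy_rec t ω]
      have husq : u t ω * u t ω = χ ω * (w (t+1) ω)^2 := by
        simp only [hudef]
        rw [show χ ω * w (t+1) ω * (χ ω * w (t+1) ω)
            = (χ ω * χ ω) * (w (t+1) ω)^2 by ring, hχidem ω]
      linear_combination (β t ω)^2 * husq
    have hβSM : StronglyMeasurable[ℱ t] (β t) := hη_meas t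
    have hint_f1 : Integrable f1 P := by
      refine Integrable.bdd_mul (hv_int t)
        (((stronglyMeasurable_const.sub hβSM).pow 2).mono (ℱ.le t)).aestronglyMeasurable
        (c := 1) (Filter.Eventually.of_forall fun ω => ?_)
      rw [Real.norm_eq_abs, abs_of_nonneg (sq_nonneg _)]
      nlinarith [hβnn t ω, hβle1 t ω]
    have hint_yu : Integrable (fun ω => y t ω * u t ω) P :=
      integrable_mul_of_sq (hy2 t) (hu2 t)
    have hint_f2 : Integrable f2 P := by
      have heq : f2 = fun ω => (2 * (1 - β t ω) * β t ω) * (y t ω * u t ω) := by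
        funext ω; simp only [hf2]; ring
      rw [heq]
      refine Integrable.bdd_mul hint_yu
        (((stronglyMeasurable_const.mul (stronglyMeasurable_const.sub hβSM)).mul
          hβSM).mono (ℱ.le t)).aestronglyMeasurable (c := 2) (Filter.Eventually.of_forall fun ω => ?_)
      rw [Real.norm_eq_abs]
      have h1 : (0:ℝ) ≤ 2 * (1 - β t ω) * β t ω := by
        nlinarith [hβnn t ω, hβle1 t ω]
      rw [abs_of_nonneg h1]
      nlinarith [hβnn t ω, hβle1 t ω]
    have hint_f3 : Integrable f3 P := by
      refine Integrable.bdd_mul (hw_sq_int (t+1))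
        (((hβSM.pow 2).mul (hχ_measT t)).mono (ℱ.le t)).aestronglyMeasurable
        (c := 1) (Filter.Eventually.of_forall fun ω => ?_)
      rw [Real.norm_eq_abs, abs_of_nonneg (mul_nonneg (sq_nonneg _) (hχnn ω))]
      calc (β t ω)^2 * χ ω ≤ 1 * 1 := by
            refine mul_le_mul ?_ (hχle1 ω) (hχnn ω) zero_le_one
            nlinarith [hβnn t ω, hβle1 t ω]
        _ = 1 := one_mul 1
    have h1 : P[v (t+1) | ℱ t] =ᵐ[P] P[f1 | ℱ t] + P[f2 | ℱ t] + P[f3 | ℱ t] := by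
      rw [hsplit]
      exact (condExp_add (hint_f1.add hint_f2) hint_f3 _).trans
        ((condExp_add hint_f1 hint_f2 _).add EventuallyEq.rfl)
    have h2 : P[f1 | ℱ t] =ᵐ[P] f1 :=
      (condExp_of_stronglyMeasurable (ℱ.le t)
        (((stronglyMeasurable_const.sub hβSM).pow 2).mul (hv_meas t)) hint_f1).symm ▸
        EventuallyEq.rfl
    have h3 : P[f2 | ℱ t] =ᵐ[P]
        fun ω => (2 * (1 - β t ω) * β t ω * y t ω) * (P[u t | ℱ t]) ω := by
      have hprod : f2 = (fun ω => 2 * (1 - β t ω) * β t ω * y t ω) * (u t) := rfl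
      rw [hprod]
      exact condExp_mul_of_stronglyMeasurable_left
        (((stronglyMeasurable_const.mul (stronglyMeasurable_const.sub hβSM)).mul
          hβSM).mul (hy_meas t)) hint_f2 (hu_int t)
    have h4 : P[f3 | ℱ t] =ᵐ[P]
        fun ω => ((β t ω)^2 * χ ω) * (P[(fun ω => (w (t+1) ω)^2) | ℱ t]) ω := by
      have hprod : f3 = (fun ω => (β t ω)^2 * χ ω) * (fun ω => (w (t+1) ω)^2) := rfl
      rw [hprod]
      exact condExp_mul_of_stronglyMeasurable_left ((hβSM.pow 2).mul (hχ_measT t))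
        hint_f3 (hw_sq_int (t+1))
    filter_upwards [h1, h2, h3, h4, hcond_u t, hmoment t] with ω e1 e2 e3 e4 e5 e6
    rw [e1]
    simp only [Pi.add_apply]
    rw [e2, e3, e4, e5, mul_zero, add_zero]
    have hvnn : 0 ≤ v t ω := sq_nonneg _
    rcases hχ01 ω with h | h
    · have hy0 : y t ω = 0 := by simp [hydef, h]
      have hv0 : v t ω = 0 := by simp [hvdef, hy0]
      simp only [hf1, hv0, h, mul_zero, add_zero, zero_mul, mul_zero]
      nlinarith [sq_nonneg (β t ω), hB]
    · have hxv : A * |x (t+1) ω|^2 + B = A * v t ω + B := by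
        simp only [hvdef, hydef, h, one_mul, sq_abs]
      have hX : (P[(fun ω => (w (t+1) ω)^2) | ℱ t]) ω ≤ A * v t ω + B := by
        rw [← hxv]; exact e6
      have hc1 : (1 - β t ω)^2 * v t ω ≤ (1 - β t ω) * v t ω := by
        nlinarith [mul_nonneg (mul_nonneg (sub_nonneg.2 (hβle1 t ω)) (hβnn t ω)) hvnn]
      have hc2 : ((β t ω)^2 * χ ω) * (P[(fun ω => (w (t+1) ω)^2) | ℱ t]) ω
          ≤ (β t ω)^2 * (A * v t ω + B) := by
        rw [h, mul_one]
        exact mul_le_mul_of_nonneg_left hX (sq_nonneg _)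
      simp only [hf1]
      linarith
  have hmainM := rs_main ℱ v β hv_meas (fun t => hη_meas t) hv_int
    (fun t ω => sq_nonneg _) (fun t ω => hη01 (t+1) ω) A B hA hB hdrift
  filter_upwards [hmainM] with ω hω hx1 hsum hdiv
  have hmem : ω ∈ S := hx1
  have hχ1 : χ ω = 1 := hχmem ω hmem
  have hv0 : Tendsto (fun t => v t ω) atTop (𝓝 0) := hω hsum hdiv
  have hveq : ∀ t, v t ω = (x (t+1) ω)^2 := by
    intro t; simp [hvdef, hydef, hχ1]
  have habs : Tendsto (fun t => |x (t+1) ω|) atTop (𝓝 0) := by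
    have h1 : Tendsto (fun t => Real.sqrt (v t ω)) atTop (𝓝 (Real.sqrt 0)) :=
      (Real.continuous_sqrt.continuousAt.tendsto).comp hv0
    rw [Real.sqrt_zero] at h1
    have heq : (fun t => |x (t+1) ω|) = fun t => Real.sqrt (v t ω) := by
      funext t; rw [hveq t, Real.sqrt_sq_eq_abs]
    rw [heq]
    exact h1
  have hx1tend : Tendsto (fun t => x (t+1) ω) atTop (𝓝 (0:ℝ)) := by
    rw [tendsto_zero_iff_norm_tendsto_zero]
    simpa [Real.norm_eq_abs] using habs
  exact (tendsto_add_atTop_iff_nat 1).1 hx1tend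

end SAtmp

/-- Stochastic approximation convergence (Lemma 1 of Singh et al. / Lemma 2 of the paper):
if `x_{t+1} = (1 - η_t) x_t + η_t w_t` with zero-mean noise of conditionally bounded second
moment and step sizes in `[0,1]` that sum to infinity but are square-summable, then
`x_t → 0` almost surely. Here `x t`, `η t` and `w (t-1)` are `ℱ (t-1)`-measurable,
expressed by a shift of index. -/
theorem stochastic_approximation_to_zero
    {Ω : Type*} {m : MeasurableSpace Ω} {P : Measure Ω} [IsProbabilityMeasure P]
    (ℱ : Filtration ℕ m) (x w η : ℕ → Ω → ℝ)
    -- x_t, η_t and w_{t-1} are ℱ_{t-1}-measurable: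
    (hx_meas : ∀ t : ℕ, StronglyMeasurable[ℱ t] (x (t + 1)))
    (hη_meas : ∀ t : ℕ, StronglyMeasurable[ℱ t] (η (t + 1)))
    (hw_meas : ∀ t : ℕ, StronglyMeasurable[ℱ t] (w t))
    -- integrability, needed so the conditional expectations are meaningful:
    (hw_int : ∀ t : ℕ, Integrable (w t) P)
    (hw_sq_int : ∀ t : ℕ, Integrable (fun ω => (w t ω) ^ 2) P)
    -- the recursion:
    (hrec : ∀ t : ℕ, ∀ ω, x (t + 1) ω = (1 - η t ω) * x t ω + η t ω * w t ω)
    -- (1) conditionally bounded second moments: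
    (A B : ℝ)
    (hmoment : ∀ t : ℕ,
      ∀ᵐ ω ∂P, (P[(fun ω => (w (t + 1) ω) ^ 2) | ℱ t]) ω ≤ A * |x (t + 1) ω| ^ 2 + B)
    -- (2) zero conditional mean:
    (hmean : ∀ t : ℕ, ∀ᵐ ω ∂P, (P[w (t + 1) | ℱ t]) ω = 0)
    -- (3) step sizes in [0,1]:
    (hη01 : ∀ t : ℕ, ∀ ω, η t ω ∈ Set.Icc (0 : ℝ) 1)
    -- (4) ∑ η_t = ∞ a.s.:
    (hη_div : ∀ᵐ ω ∂P, ¬ Summable (fun t => η t ω))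
    -- (5) ∑ η_t² < ∞ a.s.:
    (hη_sq : ∀ᵐ ω ∂P, Summable (fun t => (η t ω) ^ 2)) :
    ∀ᵐ ω ∂P, Tendsto (fun t => x t ω) atTop (𝓝 (0 : ℝ)) := by
  have hA' : (0:ℝ) ≤ max A 0 := le_max_right _ _
  have hB' : (0:ℝ) ≤ max B 0 := le_max_right _ _
  have hmoment' : ∀ t : ℕ, ∀ᵐ ω ∂P,
      (P[(fun ω => (w (t + 1) ω) ^ 2) | ℱ t]) ω ≤ max A 0 * |x (t + 1) ω| ^ 2 + max B 0 := by
    intro t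
    filter_upwards [hmoment t] with ω hω
    have h1 : A * |x (t+1) ω|^2 ≤ max A 0 * |x (t+1) ω|^2 :=
      mul_le_mul_of_nonneg_right (le_max_left A 0) (sq_nonneg _)
    have h2 : B ≤ max B 0 := le_max_left B 0
    linarith
  have hall : ∀ᵐ ω ∂P, ∀ M : ℕ, (|x 1 ω| ≤ (M:ℝ) → Summable (fun t => (η (t+1) ω)^2) →
      ¬ Summable (fun t => η (t+1) ω) →
      Tendsto (fun t => x t ω) atTop (𝓝 (0:ℝ))) :=
    ae_all_iff.2 (fun M => SAtmp.truncated_key ℱ x w η hx_meas hη_meas hw_int hw_sq_int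
      hrec (max A 0) (max B 0) hA' hB' hmoment' hmean hη01 M)
  filter_upwards [hall, hη_div, hη_sq] with ω hω hdiv hsq
  have hsum' : Summable (fun t => (η (t+1) ω)^2) := (summable_nat_add_iff 1).2 hsq
  have hdiv' : ¬ Summable (fun t => η (t+1) ω) := fun hs => hdiv ((summable_nat_add_iff 1).1 hs)
  exact hω ⌈|x 1 ω|⌉₊ (Nat.le_ceil _) hsum' hdiv'
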